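/- Let u, v : Fin m → ℂ be linearly independent over ℂ, and suppose there exist indices i, j, k such that the three pairs (u i, v i), (u j, v j), (u k, v k) ∈ ℂ × ℂ are pairwise linearly independent. Then there exists an injective ℂ-linear map C : (Fin 3 → ℂ) → (Fin m → ℂ) such that (fun x i => (x i)^2) '' {a • u + b • v | a b : ℂ} = C '' {w | ∃ a b : ℂ, w = ![a^2, a*b, b^2]}. (If the point configuration of a line in ℙ^n has more than two points, the coordinate-wise square of the line is a linearly re-embedded smooth conic, i.e., a linear re-embedding of the second Veronese curve.) -/

import Mathlib

/-- A pair of linearly independent vectors in `ℂ × ℂ` has nonzero determinant. -/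
lemma pair_det_ne_zero (p q : ℂ × ℂ) (h : LinearIndependent ℂ ![p, q]) :
    p.1 * q.2 - q.1 * p.2 ≠ 0 := by
  rw [LinearIndependent.pair_iff] at h
  intro hD
  by_cases hp1 : p.1 ≠ 0
  · have := h (q.1 / p.1) (-1) (by
      ext
      · simp [Prod.smul_def, smul_eq_mul]; field_simp; ring
      · simp [Prod.smul_def, smul_eq_mul]; field_simp; linear_combination -hD)
    simpa using this.2
  · push_neg at hp1
    by_cases hp2 : p.2 ≠ 0
    · have := h (q.2 / p.2) (-1) (by
        ext
        · simp [Prod.smul_def, smul_eq_mul]; field_simp; linear_combination hD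
        · simp [Prod.smul_def, smul_eq_mul]; field_simp; ring)
      simpa using this.2
    · push_neg at hp2
      have := h 1 0 (by ext <;> simp [hp1, hp2])
      simpa using this.1

theorem square_of_line_conic (m : ℕ) (u v : Fin m → ℂ)
    (huv : LinearIndependent ℂ ![u, v]) (i j k : Fin m)
    (hij : LinearIndependent ℂ ![(u i, v i), (u j, v j)])
    (hik : LinearIndependent ℂ ![(u i, v i), (u k, v k)])
    (hjk : LinearIndependent ℂ ![(u j, v j), (u k, v k)]) :
    ∃ C : (Fin 3 → ℂ) →ₗ[ℂ] (Fin m → ℂ), Function.Injective C ∧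
      (fun x : Fin m → ℂ => fun l => (x l) ^ 2) ''
          {x : Fin m → ℂ | ∃ a b : ℂ, x = a • u + b • v}
        = C '' {w : Fin 3 → ℂ | ∃ a b : ℂ, w = ![a ^ 2, a * b, b ^ 2]} := by
  set C : (Fin 3 → ℂ) →ₗ[ℂ] (Fin m → ℂ) :=
    { toFun := fun w l => w 0 * (u l) ^ 2 + w 1 * (2 * u l * v l) + w 2 * (v l) ^ 2
      map_add' := by intro x y; funext l; simp only [Pi.add_apply]; ring
      map_smul' := by
        intro c x; funext l
        simp only [Pi.smul_apply, smul_eq_mul, RingHom.id_apply]; ring } with hC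
  have hD3 := pair_det_ne_zero _ _ hij
  have hD2 := pair_det_ne_zero _ _ hik
  have hD1 := pair_det_ne_zero _ _ hjk
  simp only at hD1 hD2 hD3
  refine ⟨C, ?_, ?_⟩
  · rw [injective_iff_map_eq_zero]
    intro w hw
    have hE1 : w 0 * (u i) ^ 2 + w 1 * (2 * u i * v i) + w 2 * (v i) ^ 2 = 0 :=
      congrFun hw i
    have hE2 : w 0 * (u j) ^ 2 + w 1 * (2 * u j * v j) + w 2 * (v j) ^ 2 = 0 :=
      congrFun hw j
    have hE3 : w 0 * (u k) ^ 2 + w 1 * (2 * u k * v k) + w 2 * (v k) ^ 2 = 0 :=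
      congrFun hw k
    have hΔ : (u i * v j - u j * v i) * (u i * v k - u k * v i) *
        (u j * v k - u k * v j) ≠ 0 := by
      exact mul_ne_zero (mul_ne_zero hD3 hD2) hD1
    have h0 : w 0 * ((u i * v j - u j * v i) * (u i * v k - u k * v i) *
        (u j * v k - u k * v j)) = 0 := by
      linear_combination (v j * v k * (u j * v k - u k * v j)) * hE1
        - (v i * v k * (u i * v k - u k * v i)) * hE2
        + (v i * v j * (u i * v j - u j * v i)) * hE3
    have h1 : w 1 * (2 * ((u i * v j - u j * v i) * (u i * v k - u k * v i) *
        (u j * v k - u k * v j))) = 0 := by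
      linear_combination (-(u j * v k - u k * v j) * (u j * v k + u k * v j)) * hE1
        + ((u i * v k - u k * v i) * (u i * v k + u k * v i)) * hE2
        - ((u i * v j - u j * v i) * (u i * v j + u j * v i)) * hE3
    have h2 : w 2 * ((u i * v j - u j * v i) * (u i * v k - u k * v i) *
        (u j * v k - u k * v j)) = 0 := by
      linear_combination (u j * u k * (u j * v k - u k * v j)) * hE1
        - (u i * u k * (u i * v k - u k * v i)) * hE2
        + (u i * u j * (u i * v j - u j * v i)) * hE3
    have hw0 : w 0 = 0 := by
      rcases mul_eq_zero.mp h0 with h | h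
      · exact h
      · exact absurd h hΔ
    have hw1 : w 1 = 0 := by
      rcases mul_eq_zero.mp h1 with h | h
      · exact h
      · exact absurd h (mul_ne_zero two_ne_zero hΔ)
    have hw2 : w 2 = 0 := by
      rcases mul_eq_zero.mp h2 with h | h
      · exact h
      · exact absurd h hΔ
    funext l
    fin_cases l <;> simpa using (by assumption : _)
  · ext x
    simp only [Set.mem_image, Set.mem_setOf_eq]
    constructor
    · rintro ⟨y, ⟨a, b, rfl⟩, rfl⟩
      refine ⟨![a ^ 2, a * b, b ^ 2], ⟨a, b, rfl⟩, ?_⟩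
      funext l
      simp only [hC, LinearMap.coe_mk, AddHom.coe_mk, Matrix.cons_val_zero,
        Matrix.cons_val_one, Matrix.head_cons, Pi.add_apply, Pi.smul_apply,
        smul_eq_mul, Matrix.cons_val_two, Matrix.tail_cons]
      ring
    · rintro ⟨w, ⟨a, b, rfl⟩, rfl⟩
      refine ⟨a • u + b • v, ⟨a, b, rfl⟩, ?_⟩
      funext l
      simp only [hC, LinearMap.coe_mk, AddHom.coe_mk, Matrix.cons_val_zero,
        Matrix.cons_val_one, Matrix.head_cons, Pi.add_apply, Pi.smul_apply,
        smul_eq_mul, Matrix.cons_val_two, Matrix.tail_cons]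
      ring
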